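/- (Discrete Fubini / integration by parts for discrete generalized fractional operators) Let a, b be integers with a < b, α ∈ (0,1/2), λ = -α/(1-α), and f, g : {a,...,b} → ℝ. Then Σ_{s=a+1}^{b-1} f(s) · (Σ_{τ=a+1}^{s} E_{\overline{α}}(λ, s-τ+1) g(τ)) = Σ_{s=a+1}^{b-1} g(s) · (Σ_{τ=s}^{b-1} E_{\overline{α}}(λ, τ-s+1) f(τ)). -/

import Mathlib

/-- Nabla discrete Mittag-Leffler function
`E_{\overline{α}}(λ, z) = Σ_{k=0}^∞ λ^k z^{\overline{kα}} / Γ(kα+1)`,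
with the rising function `z^{\overline{β}} = Γ(z+β)/Γ(z)`. -/
noncomputable def dML (α lam z : ℝ) : ℝ :=
  ∑' k : ℕ, lam ^ k * (Real.Gamma (z + k * α) / Real.Gamma z) / Real.Gamma (k * α + 1)


/-- Discrete Fubini / summation by parts for the discrete generalized fractional
integral operators with discrete Mittag-Leffler kernel. -/
theorem discrete_generalized_parts (a b : ℤ) (hab : a < b) (α : ℝ)
    (hα0 : 0 < α) (hα2 : α < 1 / 2) (f g : ℤ → ℝ) :
    (∑ s ∈ Finset.Icc (a + 1) (b - 1), f s *
        ∑ τ ∈ Finset.Icc (a + 1) s, dML α (-(α / (1 - α))) ((s : ℝ) - (τ : ℝ) + 1) * g τ)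
      = ∑ s ∈ Finset.Icc (a + 1) (b - 1), g s *
        ∑ τ ∈ Finset.Icc s (b - 1), dML α (-(α / (1 - α))) ((τ : ℝ) - (s : ℝ) + 1) * f τ := by
  simp_rw [Finset.mul_sum]
  rw [Finset.sum_comm' (t' := Finset.Icc (a + 1) (b - 1))
    (s' := fun τ => Finset.Icc τ (b - 1))]
  · apply Finset.sum_congr rfl
    intro τ hτ
    apply Finset.sum_congr rfl
    intro s hs
    ring
  · intro s τ
    simp only [Finset.mem_Icc]
    omega
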